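/- If every nontrivial equation over every torsion-free group is solvable over that group (the Levin conjecture), then every nontrivial generalized equation with torsion-free variable group over a torsion-free group is solvable over that group (the generalized Levin conjecture). -/

import Mathlib

open List

namespace LGL

variable {A : Type*} {B : Type*} [Group A] [Group B]

/-- Interpret a letter as an element of the free product. -/
def ltr : A ⊕ B → Monoid.Coprod A B
  | .inl a => Monoid.Coprod.inl a
  | .inr b => Monoid.Coprod.inr b

def neOne : A ⊕ B → Prop
  | .inl a => a ≠ 1
  | .inr b => b ≠ 1

def alt (x y : A ⊕ B) : Prop := x.isLeft ≠ y.isLeft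

/-- A reduced word. -/
def Red (l : List (A ⊕ B)) : Prop := l.IsChain alt ∧ ∀ x ∈ l, neOne x

def prd (l : List (A ⊕ B)) : Monoid.Coprod A B := (l.map ltr).prod

@[simp] lemma prd_nil : prd ([] : List (A ⊕ B)) = 1 := rfl

@[simp] lemma prd_cons (x : A ⊕ B) (l : List (A ⊕ B)) :
    prd (x :: l) = ltr x * prd l := by simp [prd]

@[simp] lemma prd_append (l₁ l₂ : List (A ⊕ B)) :
    prd (l₁ ++ l₂) = prd l₁ * prd l₂ := by simp [prd]

lemma red_nil : Red ([] : List (A ⊕ B)) := ⟨isChain_nil, by simp⟩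

lemma Red.tail {x : A ⊕ B} {l : List (A ⊕ B)} (h : Red (x :: l)) : Red l :=
  ⟨h.1.tail, fun y hy => h.2 y (mem_cons_of_mem _ hy)⟩

lemma red_singleton {x : A ⊕ B} (h : neOne x) : Red [x] :=
  ⟨isChain_singleton x, by simpa⟩

lemma Red.append_left {l₁ l₂ : List (A ⊕ B)} (h : Red (l₁ ++ l₂)) : Red l₁ :=
  ⟨(isChain_append.1 h.1).1, fun y hy => h.2 y (mem_append_left _ hy)⟩

lemma Red.append_right {l₁ l₂ : List (A ⊕ B)} (h : Red (l₁ ++ l₂)) : Red l₂ :=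
  ⟨(isChain_append.1 h.1).2.1, fun y hy => h.2 y (mem_append_right _ hy)⟩

open scoped Classical in
noncomputable def aconsA (a : A) : List (A ⊕ B) → List (A ⊕ B)
  | [] => if a = 1 then [] else [.inl a]
  | .inl a' :: rest => if a * a' = 1 then rest else .inl (a * a') :: rest
  | .inr b' :: rest => if a = 1 then .inr b' :: rest else .inl a :: .inr b' :: rest

open scoped Classical in
noncomputable def aconsB (b : B) : List (A ⊕ B) → List (A ⊕ B)
  | [] => if b = 1 then [] else [.inr b]
  | .inr b' :: rest => if b * b' = 1 then rest else .inr (b * b') :: rest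
  | .inl a' :: rest => if b = 1 then .inl a' :: rest else .inr b :: .inl a' :: rest

lemma red_aconsA (a : A) {l : List (A ⊕ B)} (h : Red l) : Red (aconsA a l) := by
  classical
  match l with
  | [] =>
    rw [aconsA]; split_ifs with h1
    · exact red_nil
    · exact red_singleton h1
  | .inl a' :: rest =>
    rw [aconsA]; split_ifs with h1
    · exact h.tail
    · refine ⟨?_, ?_⟩
      · rcases h with ⟨hc, _⟩
        rw [isChain_cons] at hc ⊢
        exact ⟨fun y hy => hc.1 y hy, hc.2⟩
      · intro y hy
        rcases mem_cons.1 hy with rfl | hy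
        · exact h1
        · exact h.2 y (mem_cons_of_mem _ hy)
  | .inr b' :: rest =>
    rw [aconsA]; split_ifs with h1
    · exact h
    · refine ⟨?_, ?_⟩
      · rw [isChain_cons_cons]
        exact ⟨by simp [alt], h.1⟩
      · intro y hy
        rcases mem_cons.1 hy with rfl | hy
        · exact h1
        · exact h.2 y hy

lemma red_aconsB (b : B) {l : List (A ⊕ B)} (h : Red l) : Red (aconsB b l) := by
  classical
  match l with
  | [] =>
    rw [aconsB]; split_ifs with h1
    · exact red_nil
    · exact red_singleton h1
  | .inr b' :: rest =>
    rw [aconsB]; split_ifs with h1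
    · exact h.tail
    · refine ⟨?_, ?_⟩
      · rcases h with ⟨hc, _⟩
        rw [isChain_cons] at hc ⊢
        exact ⟨fun y hy => hc.1 y hy, hc.2⟩
      · intro y hy
        rcases mem_cons.1 hy with rfl | hy
        · exact h1
        · exact h.2 y (mem_cons_of_mem _ hy)
  | .inl a' :: rest =>
    rw [aconsB]; split_ifs with h1
    · exact h
    · refine ⟨?_, ?_⟩
      · rw [isChain_cons_cons]
        exact ⟨by simp [alt], h.1⟩
      · intro y hy
        rcases mem_cons.1 hy with rfl | hy
        · exact h1
        · exact h.2 y hy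


lemma aconsA_one {l : List (A ⊕ B)} (h : Red l) : aconsA (1 : A) l = l := by
  classical
  match l with
  | [] => rw [aconsA]; simp
  | .inl a' :: rest =>
    rw [aconsA]
    rw [if_neg (by simpa [neOne] using h.2 _ (mem_cons_self)), one_mul]
  | .inr b' :: rest => rw [aconsA]; simp

lemma aconsB_one {l : List (A ⊕ B)} (h : Red l) : aconsB (1 : B) l = l := by
  classical
  match l with
  | [] => rw [aconsB]; simp
  | .inr b' :: rest =>
    rw [aconsB]
    rw [if_neg (by simpa [neOne] using h.2 _ (mem_cons_self)), one_mul]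
  | .inl a' :: rest => rw [aconsB]; simp

lemma aconsA_mul (a₁ a₂ : A) {l : List (A ⊕ B)} (h : Red l) :
    aconsA (a₁ * a₂) l = aconsA a₁ (aconsA a₂ l) := by
  classical
  match l with
  | [] =>
    by_cases h2 : a₂ = 1
    · subst h2; rw [mul_one]; simp [aconsA]
    · simp only [aconsA, if_neg h2]
  | .inl a' :: rest =>
    by_cases h2 : a₂ * a' = 1
    · have ha' : a' ≠ 1 := by simpa [neOne] using h.2 _ (mem_cons_self)
      have ha : a₁ * a₂ * a' = a₁ := by rw [mul_assoc, h2, mul_one]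
      simp only [aconsA, if_pos h2]
      rw [ha]
      rcases rest with _ | ⟨x, rest'⟩
      · simp only [aconsA]
      · cases x with
        | inl a'' =>
          exact absurd (isChain_cons_cons.1 h.1).1 (by simp [alt])
        | inr b'' => simp only [aconsA]
    · simp only [aconsA, if_neg h2]
      rw [mul_assoc]
  | .inr b' :: rest =>
    by_cases h2 : a₂ = 1
    · subst h2; rw [mul_one]; simp [aconsA]
    · simp only [aconsA, if_neg h2]

lemma aconsB_mul (b₁ b₂ : B) {l : List (A ⊕ B)} (h : Red l) :
    aconsB (b₁ * b₂) l = aconsB b₁ (aconsB b₂ l) := by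
  classical
  match l with
  | [] =>
    by_cases h2 : b₂ = 1
    · subst h2; rw [mul_one]; simp [aconsB]
    · simp only [aconsB, if_neg h2]
  | .inr b' :: rest =>
    by_cases h2 : b₂ * b' = 1
    · have hb' : b' ≠ 1 := by simpa [neOne] using h.2 _ (mem_cons_self)
      have hb : b₁ * b₂ * b' = b₁ := by rw [mul_assoc, h2, mul_one]
      simp only [aconsB, if_pos h2]
      rw [hb]
      rcases rest with _ | ⟨x, rest'⟩
      · simp only [aconsB]
      · cases x with
        | inr b'' =>
          exact absurd (isChain_cons_cons.1 h.1).1 (by simp [alt])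
        | inl a'' => simp only [aconsB]
    · simp only [aconsB, if_neg h2]
      rw [mul_assoc]
  | .inl a' :: rest =>
    by_cases h2 : b₂ = 1
    · subst h2; rw [mul_one]; simp [aconsB]
    · simp only [aconsB, if_neg h2]

/-- The type of reduced words. -/
def NF (A B : Type*) [Group A] [Group B] := {l : List (A ⊕ B) // Red l}

noncomputable def rhoA : A →* Function.End (NF A B) where
  toFun a := fun l => ⟨aconsA a l.1, red_aconsA a l.2⟩
  map_one' := funext fun l => Subtype.ext (aconsA_one l.2)
  map_mul' a₁ a₂ := funext fun l => Subtype.ext (aconsA_mul a₁ a₂ l.2)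

noncomputable def rhoB : B →* Function.End (NF A B) where
  toFun b := fun l => ⟨aconsB b l.1, red_aconsB b l.2⟩
  map_one' := funext fun l => Subtype.ext (aconsB_one l.2)
  map_mul' b₁ b₂ := funext fun l => Subtype.ext (aconsB_mul b₁ b₂ l.2)

noncomputable def Phi : Monoid.Coprod A B →* Function.End (NF A B) :=
  Monoid.Coprod.lift rhoA rhoB

lemma Phi_eval {l : List (A ⊕ B)} (h : Red l) :
    Phi (prd l) ⟨[], red_nil⟩ = ⟨l, h⟩ := by
  classical
  induction l with
  | nil => simp [prd_nil, map_one]; rfl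
  | cons x l' ih =>
    rw [prd_cons, map_mul]
    have hred : Red l' := Red.tail h
    have : Phi (prd l') ⟨[], red_nil⟩ = ⟨l', hred⟩ := ih hred
    show Phi (ltr x) (Phi (prd l') ⟨[], red_nil⟩) = _
    rw [this]
    have hne : neOne x := h.2 x (mem_cons_self)
    cases x with
    | inl a =>
      show rhoA a ⟨l', hred⟩ = _
      apply Subtype.ext
      show aconsA a l' = Sum.inl a :: l'
      rcases l' with _ | ⟨y, rest⟩
      · rw [aconsA, if_neg hne]
      · cases y with
        | inl a' => exact absurd (isChain_cons_cons.1 h.1).1 (by simp [alt])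
        | inr b' => rw [aconsA, if_neg hne]
    | inr b =>
      show rhoB b ⟨l', hred⟩ = _
      apply Subtype.ext
      show aconsB b l' = Sum.inr b :: l'
      rcases l' with _ | ⟨y, rest⟩
      · rw [aconsB, if_neg hne]
      · cases y with
        | inr b' => exact absurd (isChain_cons_cons.1 h.1).1 (by simp [alt])
        | inl a' => rw [aconsB, if_neg hne]

lemma prd_inj {l l' : List (A ⊕ B)} (h : Red l) (h' : Red l') (he : prd l = prd l') :
    l = l' := by
  have := (Phi_eval h).symm.trans (he ▸ Phi_eval h')
  exact congrArg Subtype.val this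

lemma prd_ne_one {l : List (A ⊕ B)} (h : Red l) (hne : l ≠ []) : prd l ≠ 1 := fun hh =>
  hne (prd_inj h red_nil (by simpa using hh))

lemma prd_aconsA (a : A) {l : List (A ⊕ B)} (h : Red l) :
    prd (aconsA a l) = Monoid.Coprod.inl a * prd l := by
  classical
  match l with
  | [] =>
    by_cases h1 : a = 1
    · subst h1; simp [aconsA]
    · simp [aconsA, if_neg h1, ltr]
  | .inl a' :: rest =>
    by_cases h1 : a * a' = 1
    · simp only [aconsA, if_pos h1, prd_cons, ltr]
      rw [← mul_assoc, ← map_mul, h1, map_one, one_mul]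
    · simp only [aconsA, if_neg h1, prd_cons, ltr]
      rw [← mul_assoc, ← map_mul]
  | .inr b' :: rest =>
    by_cases h1 : a = 1
    · subst h1; simp [aconsA]
    · simp [aconsA, if_neg h1, ltr]

lemma prd_aconsB (b : B) {l : List (A ⊕ B)} (h : Red l) :
    prd (aconsB b l) = Monoid.Coprod.inr b * prd l := by
  classical
  match l with
  | [] =>
    by_cases h1 : b = 1
    · subst h1; simp [aconsB]
    · simp [aconsB, if_neg h1, ltr]
  | .inr b' :: rest =>
    by_cases h1 : b * b' = 1
    · simp only [aconsB, if_pos h1, prd_cons, ltr]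
      rw [← mul_assoc, ← map_mul, h1, map_one, one_mul]
    · simp only [aconsB, if_neg h1, prd_cons, ltr]
      rw [← mul_assoc, ← map_mul]
  | .inl a' :: rest =>
    by_cases h1 : b = 1
    · subst h1; simp [aconsB]
    · simp [aconsB, if_neg h1, ltr]

lemma exists_red (x : Monoid.Coprod A B) : ∃ l : List (A ⊕ B), Red l ∧ prd l = x := by
  refine ⟨(Phi x ⟨[], red_nil⟩).1, (Phi x ⟨[], red_nil⟩).2, ?_⟩
  induction x using Monoid.Coprod.induction_on' with
  | one => simp [map_one]; rfl
  | inl_mul a x ih =>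
    rw [map_mul]
    show prd ((rhoA a) (Phi x ⟨[], red_nil⟩)).1 = _
    rw [show ((rhoA a) (Phi x ⟨[], red_nil⟩)).1 = aconsA a (Phi x ⟨[], red_nil⟩).1 from rfl,
      prd_aconsA a (Phi x ⟨[], red_nil⟩).2, ih]
  | inr_mul b x ih =>
    rw [map_mul]
    show prd ((rhoB b) (Phi x ⟨[], red_nil⟩)).1 = _
    rw [show ((rhoB b) (Phi x ⟨[], red_nil⟩)).1 = aconsB b (Phi x ⟨[], red_nil⟩).1 from rfl,
      prd_aconsB b (Phi x ⟨[], red_nil⟩).2, ih]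


/-- Cyclically reduced of length ≥ 2 (or detecting it): head and last letters
lie in different factors. -/
def CycRed (l : List (A ⊕ B)) : Prop :=
  l.head?.map Sum.isLeft ≠ l.getLast?.map Sum.isLeft

lemma CycRed.ne_nil {l : List (A ⊕ B)} (h : CycRed l) : l ≠ [] := by
  rintro rfl; exact h rfl

lemma cycRed_of_ends {d e : A ⊕ B} (mid : List (A ⊕ B)) (h : alt d e) :
    CycRed (d :: mid ++ [e]) := by
  have h1 : (d :: mid ++ [e]).head? = some d := rfl
  have h2 : (d :: mid ++ [e]).getLast? = some e := by
    rw [show d :: mid ++ [e] = (d :: mid) ++ [e] from rfl, getLast?_concat]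
  rw [CycRed, h1, h2]
  simpa [alt] using h

theorem trich_aux : ∀ (n : ℕ) (l : List (A ⊕ B)), l.length ≤ n → Red l →
    (∃ a : A, IsConj (Monoid.Coprod.inl a) (prd l)) ∨
    (∃ b : B, IsConj (Monoid.Coprod.inr b) (prd l)) ∨
    (∃ l' : List (A ⊕ B), Red l' ∧ CycRed l' ∧ IsConj (prd l') (prd l)) := by
  intro n
  induction n with
  | zero =>
    intro l hl _
    rw [List.length_eq_zero_iff.1 (Nat.le_zero.1 hl)]
    exact Or.inl ⟨1, by simp⟩
  | succ n ih =>
    intro l hlen hred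
    rcases l with _ | ⟨d, l₂⟩
    · exact Or.inl ⟨1, by simp⟩
    rcases (List.eq_nil_or_concat l₂) with rfl | ⟨mid, e, hme⟩
    · -- single letter
      cases d with
      | inl a => exact Or.inl ⟨a, by simp [ltr]; exact ⟨1, by group⟩⟩
      | inr b => exact Or.inr (Or.inl ⟨b, by simp [ltr]; exact ⟨1, by group⟩⟩)
    rw [List.concat_eq_append] at hme
    subst hme
    by_cases halt : alt d e
    · exact Or.inr (Or.inr ⟨d :: mid ++ [e], hred, cycRed_of_ends mid halt, IsConj.refl _⟩)
    · -- d and e on the same side; shorten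
      have hprd : prd (d :: mid ++ [e]) = ltr d * prd mid * ltr e := by
        simp [mul_assoc]
      have hredmid : Red mid := (Red.tail hred).append_left
      -- the two symmetric cases
      have key : ∃ l' : List (A ⊕ B), Red l' ∧ l'.length ≤ n ∧
          IsConj (prd l') (prd (d :: mid ++ [e])) := by
        have hlen2 : mid.length + 2 ≤ n + 1 := by simpa using hlen
        have hED : ltr e * ltr d = 1 ∨
            ∃ f : A ⊕ B, neOne f ∧ (∀ x : A ⊕ B, alt x f ↔ alt x e) ∧
              ltr f = ltr e * ltr d := by
          cases d with
          | inl a₁ =>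
            cases e with
            | inl a₂ =>
              by_cases hc : a₂ * a₁ = 1
              · exact Or.inl (by rw [show ltr (Sum.inl a₂ : A ⊕ B) = Monoid.Coprod.inl a₂ from
                  rfl, show ltr (Sum.inl a₁ : A ⊕ B) = Monoid.Coprod.inl a₁ from rfl, ← map_mul,
                  hc, map_one])
              · exact Or.inr ⟨Sum.inl (a₂ * a₁), hc, fun x => Iff.rfl, by simp [ltr, map_mul]⟩
            | inr b₂ => exact absurd (by simp [alt]) halt
          | inr b₁ =>
            cases e with
            | inl a₂ => exact absurd (by simp [alt]) halt
            | inr b₂ =>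
              by_cases hc : b₂ * b₁ = 1
              · exact Or.inl (by rw [show ltr (Sum.inr b₂ : A ⊕ B) = Monoid.Coprod.inr b₂ from
                  rfl, show ltr (Sum.inr b₁ : A ⊕ B) = Monoid.Coprod.inr b₁ from rfl, ← map_mul,
                  hc, map_one])
              · exact Or.inr ⟨Sum.inr (b₂ * b₁), hc, fun x => Iff.rfl, by simp [ltr, map_mul]⟩
        rcases hED with hc | ⟨f, hf1, hf2, hf3⟩
        · -- cancellation : use mid
          refine ⟨mid, hredmid, by omega, ?_⟩
          rw [isConj_iff]
          refine ⟨ltr d, ?_⟩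
          have he : ltr e = (ltr d)⁻¹ := by
            rw [eq_inv_iff_mul_eq_one]; exact hc
          rw [hprd, he]
        · -- combination : use mid ++ [f]
          refine ⟨mid ++ [f], ?_, by simpa using by omega, ?_⟩
          · constructor
            · rw [isChain_append]
              refine ⟨hredmid.1, isChain_singleton f, ?_⟩
              intro x hx y hy
              simp only [head?_cons, Option.mem_some_iff] at hy
              subst hy
              rw [hf2]
              -- from the chain of mid ++ [e]
              have hch : IsChain alt (mid ++ [e]) := (Red.tail hred).1
              exact (isChain_append.1 hch).2.2 x hx e rfl
            · intro y hy
              rcases mem_append.1 hy with hy | hy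
              · exact hredmid.2 y hy
              · rw [mem_singleton.1 hy]; exact hf1
          · rw [isConj_iff]
            refine ⟨ltr d, ?_⟩
            rw [hprd, prd_append]
            simp only [prd_cons, prd_nil, mul_one, hf3]
            group
      obtain ⟨l', hred', hlen', hconj'⟩ := key
      rcases ih l' hlen' hred' with ⟨a, ha⟩ | ⟨b, hb⟩ | ⟨l'', h1, h2, h3⟩
      · exact Or.inl ⟨a, ha.trans hconj'⟩
      · exact Or.inr (Or.inl ⟨b, hb.trans hconj'⟩)
      · exact Or.inr (Or.inr ⟨l'', h1, h2, h3.trans hconj'⟩)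

theorem trich (x : Monoid.Coprod A B) :
    (∃ a : A, IsConj (Monoid.Coprod.inl a) x) ∨
    (∃ b : B, IsConj (Monoid.Coprod.inr b) x) ∨
    (∃ l : List (A ⊕ B), Red l ∧ CycRed l ∧ IsConj (prd l) x) := by
  obtain ⟨l, hl, rfl⟩ := exists_red x
  exact trich_aux l.length l le_rfl hl


lemma head?_reverse' {α : Type*} (l : List α) : l.reverse.head? = l.getLast? := by
  rcases List.eq_nil_or_concat l with rfl | ⟨l', a, rfl⟩
  · rfl
  · rw [List.concat_eq_append, reverse_append]
    simp [getLast?_append_cons]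

lemma cycRed_alt {l : List (A ⊕ B)} (hc : CycRed l) {x y : A ⊕ B}
    (hx : x ∈ l.head?) (hy : y ∈ l.getLast?) : alt y x := by
  rw [CycRed, Option.mem_def.1 hx, Option.mem_def.1 hy] at hc
  intro h
  exact hc (by simp [Option.map_some, h.symm])

lemma prd_pow_ne_one {l : List (A ⊕ B)} (hl : Red l) (hc : CycRed l) (n : ℕ) :
    prd l ^ (n + 1) ≠ 1 := by
  have hne : l ≠ [] := hc.ne_nil
  have key : ∀ m : ℕ, ∃ L : List (A ⊕ B), Red L ∧ L.head? = l.head? ∧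
      L.getLast? = l.getLast? ∧ prd L = prd l ^ (m + 1) := by
    intro m
    induction m with
    | zero => exact ⟨l, hl, rfl, rfl, by rw [pow_one]⟩
    | succ m ih =>
      obtain ⟨L, hL, hh, hg, hp⟩ := ih
      have hLne : L ≠ [] := by
        intro h; rw [h] at hh; exact hne (head?_eq_none_iff.1 hh.symm)
      refine ⟨l ++ L, ⟨?_, ?_⟩, ?_, ?_, ?_⟩
      · rw [isChain_append]
        refine ⟨hl.1, hL.1, ?_⟩
        intro x hx y hy
        rw [hh] at hy
        exact cycRed_alt hc hy hx
      · intro y hy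
        rcases mem_append.1 hy with hy | hy
        · exact hl.2 y hy
        · exact hL.2 y hy
      · rw [head?_append_of_ne_nil _ hne]
      · rw [getLast?_append_of_ne_nil _ hLne, hg]
      · rw [prd_append, hp]; exact (pow_succ' _ _).symm

  obtain ⟨L, hL, hh, _, hp⟩ := key n
  have hLne : L ≠ [] := by
    intro h; rw [h] at hh; exact hne (head?_eq_none_iff.1 hh.symm)
  rw [← hp]
  exact prd_ne_one hL hLne

lemma conj_pow'' {G : Type*} [Group G] (c y : G) (m : ℕ) :
    (c * y * c⁻¹) ^ m = c * y ^ m * c⁻¹ := by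
  induction m with
  | zero => simp
  | succ m ih => rw [pow_succ, pow_succ, ih]; group

lemma eq_one_of_conj_eq_one {G : Type*} [Group G] {c y : G} (h : c * y * c⁻¹ = 1) : y = 1 := by
  have : y = c⁻¹ * (c * y * c⁻¹) * c := by group
  rw [this, h]; group

/-- Free products of torsion-free groups are torsion-free. -/
theorem tfree (hA : ∀ a : A, IsOfFinOrder a → a = 1) (hB : ∀ b : B, IsOfFinOrder b → b = 1) :
    ∀ x : Monoid.Coprod A B, IsOfFinOrder x → x = 1 := by
  intro x hx
  obtain ⟨m, hm, hpow⟩ := isOfFinOrder_iff_pow_eq_one.1 hx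
  rcases trich x with ⟨a, ha⟩ | ⟨b, hb⟩ | ⟨l, h1, h2, h3⟩
  · obtain ⟨c, hc⟩ := isConj_iff.1 ha
    have h1 : (Monoid.Coprod.inl a : Monoid.Coprod A B) ^ m = 1 := by
      have h2 : (c * Monoid.Coprod.inl a * c⁻¹) ^ m = 1 := by rw [hc, hpow]
      rw [conj_pow''] at h2
      exact eq_one_of_conj_eq_one h2
    have ha' : a ^ m = 1 := Monoid.Coprod.inl_injective
      (by rw [map_pow, h1, map_one] : (Monoid.Coprod.inl (a ^ m) : Monoid.Coprod A B)
        = Monoid.Coprod.inl 1)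
    have ha1 : a = 1 := hA a (isOfFinOrder_iff_pow_eq_one.2 ⟨m, hm, ha'⟩)
    rw [← hc, ha1, map_one, mul_one, mul_inv_cancel]
  · obtain ⟨c, hc⟩ := isConj_iff.1 hb
    have h1 : (Monoid.Coprod.inr b : Monoid.Coprod A B) ^ m = 1 := by
      have h2 : (c * Monoid.Coprod.inr b * c⁻¹) ^ m = 1 := by rw [hc, hpow]
      rw [conj_pow''] at h2
      exact eq_one_of_conj_eq_one h2
    have hb' : b ^ m = 1 := Monoid.Coprod.inr_injective
      (by rw [map_pow, h1, map_one] : (Monoid.Coprod.inr (b ^ m) : Monoid.Coprod A B)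
        = Monoid.Coprod.inr 1)
    have hb1 : b = 1 := hB b (isOfFinOrder_iff_pow_eq_one.2 ⟨m, hm, hb'⟩)
    rw [← hc, hb1, map_one, mul_one, mul_inv_cancel]
  · obtain ⟨c, hc⟩ := isConj_iff.1 h3
    have h4 : prd l ^ m = 1 := by
      have h5 : (c * prd l * c⁻¹) ^ m = 1 := by rw [hc, hpow]
      rw [conj_pow''] at h5
      exact eq_one_of_conj_eq_one h5
    obtain ⟨k, rfl⟩ : ∃ k, m = k + 1 := ⟨m - 1, by omega⟩
    exact absurd h4 (prd_pow_ne_one h1 h2 k)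


def sinv : A ⊕ B → A ⊕ B := Sum.map (·⁻¹) (·⁻¹)

@[simp] lemma isLeft_sinv (x : A ⊕ B) : (sinv x).isLeft = x.isLeft := by
  cases x <;> rfl

@[simp] lemma ltr_sinv (x : A ⊕ B) : ltr (sinv x) = (ltr x)⁻¹ := by
  cases x <;> simp [ltr, sinv]

lemma neOne_sinv {x : A ⊕ B} (h : neOne x) : neOne (sinv x) := by
  cases x <;> simpa [neOne, sinv] using h

def pal (L : List (A ⊕ B)) (c : A ⊕ B) : List (A ⊕ B) := L ++ c :: (L.reverse.map sinv)

lemma pal_nil (c : A ⊕ B) : pal [] c = [c] := rfl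

lemma pal_cons (x : A ⊕ B) (L : List (A ⊕ B)) (c : A ⊕ B) :
    pal (x :: L) c = x :: (pal L c ++ [sinv x]) := by
  simp [pal]

lemma prd_pal_cons (x : A ⊕ B) (L : List (A ⊕ B)) (c : A ⊕ B) :
    prd (pal (x :: L) c) = ltr x * prd (pal L c) * (ltr x)⁻¹ := by
  rw [pal_cons, prd_cons, prd_append]
  simp [mul_assoc]

lemma red_pal {L : List (A ⊕ B)} {c : A ⊕ B} (h : Red (L ++ [c])) : Red (pal L c) := by
  have hchL : IsChain alt L := ((isChain_append (l₁ := L) (l₂ := [c])).1 h.1).1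
  have hjun : ∀ x ∈ L.getLast?, alt x c := by
    intro x hx
    exact ((isChain_append (l₁ := L) (l₂ := [c])).1 h.1).2.2 x hx c rfl
  constructor
  · rw [show pal L c = (L ++ [c]) ++ L.reverse.map sinv by simp [pal], isChain_append]
    refine ⟨h.1, ?_, ?_⟩
    · rw [isChain_map]
      have : IsChain (fun a b : A ⊕ B => alt (sinv a) (sinv b)) L.reverse := by
        rw [isChain_reverse]
        exact hchL.imp (fun a b hab => by simpa [alt, flip] using Ne.symm hab)
      exact this
    · intro x hx y hy
      rw [getLast?_append_cons, getLast?_singleton, Option.mem_some_iff] at hx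
      subst hx
      rw [head?_map, head?_reverse'] at hy
      rw [Option.mem_def, Option.map_eq_some_iff] at hy
      obtain ⟨z, hz, rfl⟩ := hy
      have := hjun z (Option.mem_def.2 hz)
      simp only [alt, isLeft_sinv]
      exact Ne.symm this
  · intro y hy
    unfold pal at hy
    rcases mem_append.1 hy with hy | hy
    · exact h.2 y (mem_append_left _ hy)
    rcases mem_cons.1 hy with rfl | hy
    · exact h.2 y (mem_append_right _ (mem_singleton_self _))
    · obtain ⟨z, hz, rfl⟩ := mem_map.1 hy
      exact neOne_sinv (h.2 z (mem_append_left _ (mem_reverse.1 hz)))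

theorem conj_ltr_pal (x : Monoid.Coprod A B) (c : A ⊕ B) (hc : neOne c) :
    ∃ (L : List (A ⊕ B)) (c' : A ⊕ B), Red (L ++ [c']) ∧ (c').isLeft = c.isLeft ∧
      x * ltr c * x⁻¹ = prd (pal L c') := by
  induction x using Monoid.Coprod.induction_on' with
  | one => exact ⟨[], c, red_singleton hc, rfl, by simp [pal_nil]⟩
  | inl_mul a x ih =>
    obtain ⟨L, c', hred, hside, heq⟩ := ih
    have hgoal : (Monoid.Coprod.inl a * x) * ltr c * (Monoid.Coprod.inl a * x)⁻¹ =
        Monoid.Coprod.inl a * prd (pal L c') * (Monoid.Coprod.inl a)⁻¹ := by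
      rw [mul_inv_rev, ← heq]; group
    rw [hgoal]
    by_cases ha : a = 1
    · exact ⟨L, c', hred, hside, by rw [ha]; simp⟩
    rcases L with _ | ⟨d, L₁⟩
    · -- L = []
      cases c' with
      | inl a'' =>
        have ha'' : a'' ≠ 1 := by simpa [neOne] using hred.2 _ (mem_singleton_self _)
        refine ⟨[], .inl (a * a'' * a⁻¹), red_singleton ?_, hside, ?_⟩
        · simp only [neOne]
          intro hh
          exact ha'' (by
            have : a⁻¹ * (a * a'' * a⁻¹) * a = a⁻¹ * 1 * a := by rw [hh]
            simpa [mul_assoc] using this)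
        · simp [pal_nil, ltr, map_mul]
      | inr b'' =>
        refine ⟨[.inl a], .inr b'', ⟨?_, ?_⟩, hside, ?_⟩
        · exact isChain_pair.2 (by simp [alt])
        · intro y hy
          rcases mem_cons.1 hy with rfl | hy
          · exact ha
          · simpa using hred.2 _ (by simpa using hy)
        · rw [prd_pal_cons]; rfl
    · cases d with
      | inr b₁ =>
        refine ⟨.inl a :: .inr b₁ :: L₁, c', ⟨?_, ?_⟩, hside, ?_⟩
        · exact isChain_cons_cons.2 ⟨by simp [alt], hred.1⟩
        · intro y hy
          rcases mem_cons.1 hy with rfl | hy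
          · exact ha
          · exact hred.2 y hy
        · rw [prd_pal_cons (Sum.inl a)]; rfl
      | inl a₁ =>
        by_cases haa : a * a₁ = 1
        · refine ⟨L₁, c', hred.tail, hside, ?_⟩
          rw [prd_pal_cons]
          have ha₁ : a₁ = a⁻¹ := by
            have := congrArg (fun z => a⁻¹ * z) haa
            exact (by simpa [mul_assoc] using this.symm : _ = a₁).symm
          have he : (ltr (Sum.inl a₁ : A ⊕ B)) = (Monoid.Coprod.inl a)⁻¹ := by
            simp only [ltr]
            rw [ha₁, map_inv]
          rw [he]
          group
        · refine ⟨.inl (a * a₁) :: L₁, c', ⟨?_, ?_⟩, hside, ?_⟩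
          · exact isChain_cons.2 ⟨fun y hy => (isChain_cons.1 hred.1).1 y hy,
              (isChain_cons.1 hred.1).2⟩
          · intro y hy
            rcases mem_cons.1 hy with rfl | hy
            · exact haa
            · exact hred.2 y (mem_cons_of_mem _ hy)
          · rw [prd_pal_cons, prd_pal_cons]
            simp only [ltr, map_mul]
            group
  | inr_mul b x ih =>
    obtain ⟨L, c', hred, hside, heq⟩ := ih
    have hgoal : (Monoid.Coprod.inr b * x) * ltr c * (Monoid.Coprod.inr b * x)⁻¹ =
        Monoid.Coprod.inr b * prd (pal L c') * (Monoid.Coprod.inr b)⁻¹ := by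
      rw [mul_inv_rev, ← heq]; group
    rw [hgoal]
    by_cases hb : b = 1
    · exact ⟨L, c', hred, hside, by rw [hb]; simp⟩
    rcases L with _ | ⟨d, L₁⟩
    · cases c' with
      | inr b'' =>
        have hb'' : b'' ≠ 1 := by simpa [neOne] using hred.2 _ (mem_singleton_self _)
        refine ⟨[], .inr (b * b'' * b⁻¹), red_singleton ?_, hside, ?_⟩
        · simp only [neOne]
          intro hh
          exact hb'' (by
            have : b⁻¹ * (b * b'' * b⁻¹) * b = b⁻¹ * 1 * b := by rw [hh]
            simpa [mul_assoc] using this)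
        · simp [pal_nil, ltr, map_mul]
      | inl a'' =>
        refine ⟨[.inr b], .inl a'', ⟨?_, ?_⟩, hside, ?_⟩
        · exact isChain_pair.2 (by simp [alt])
        · intro y hy
          rcases mem_cons.1 hy with rfl | hy
          · exact hb
          · simpa using hred.2 _ (by simpa using hy)
        · rw [prd_pal_cons]; rfl
    · cases d with
      | inl a₁ =>
        refine ⟨.inr b :: .inl a₁ :: L₁, c', ⟨?_, ?_⟩, hside, ?_⟩
        · exact isChain_cons_cons.2 ⟨by simp [alt], hred.1⟩
        · intro y hy
          rcases mem_cons.1 hy with rfl | hy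
          · exact hb
          · exact hred.2 y hy
        · rw [prd_pal_cons (Sum.inr b)]; rfl
      | inr b₁ =>
        by_cases hbb : b * b₁ = 1
        · refine ⟨L₁, c', hred.tail, hside, ?_⟩
          rw [prd_pal_cons]
          have hb₁ : b₁ = b⁻¹ := by
            have := congrArg (fun z => b⁻¹ * z) hbb
            exact (by simpa [mul_assoc] using this.symm : _ = b₁).symm
          have he : (ltr (Sum.inr b₁ : A ⊕ B)) = (Monoid.Coprod.inr b)⁻¹ := by
            simp only [ltr]
            rw [hb₁, map_inv]
          rw [he]
          group
        · refine ⟨.inr (b * b₁) :: L₁, c', ⟨?_, ?_⟩, hside, ?_⟩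
          · exact isChain_cons.2 ⟨fun y hy => (isChain_cons.1 hred.1).1 y hy,
              (isChain_cons.1 hred.1).2⟩
          · intro y hy
            rcases mem_cons.1 hy with rfl | hy
            · exact hbb
            · exact hred.2 y (mem_cons_of_mem _ hy)
          · rw [prd_pal_cons, prd_pal_cons]
            simp only [ltr, map_mul]
            group

theorem not_conj_prd {l : List (A ⊕ B)} (hl : Red l) (hc : CycRed l)
    (z : Monoid.Coprod A B) (c : A ⊕ B) : z * ltr c * z⁻¹ ≠ prd l := by
  by_cases h1 : neOne c
  · obtain ⟨L, c', hred, _, heq⟩ := conj_ltr_pal z c h1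
    rw [heq]
    intro hEq
    have hpal := prd_inj (red_pal hred) hl hEq
    rcases L with _ | ⟨f, L₁⟩
    · rw [pal_nil] at hpal
      rw [← hpal] at hc
      exact hc rfl
    · rw [pal_cons] at hpal
      rw [← hpal] at hc
      have hh : (f :: (pal L₁ c' ++ [sinv f])).head? = some f := rfl
      have hg : (f :: (pal L₁ c' ++ [sinv f])).getLast? = some (sinv f) := by
        rw [show f :: (pal L₁ c' ++ [sinv f]) = (f :: pal L₁ c') ++ [sinv f] from rfl,
          getLast?_append_cons, getLast?_singleton]
      rw [CycRed, hh, hg] at hc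
      exact hc (by simp)
  · have hc1 : ltr c = 1 := by
      cases c with
      | inl a =>
        have h2 : a = 1 := not_not.1 h1
        simp [ltr, h2]
      | inr b =>
        have h2 : b = 1 := not_not.1 h1
        simp [ltr, h2]
    rw [hc1, mul_one, mul_inv_cancel]
    exact (prd_ne_one hl hc.ne_nil).symm


/-! ### Expansion of a word in `A ∗ B` to a word in `(A ∗ B) ∗ ℤ` -/

def t0 : Multiplicative ℤ := Multiplicative.ofAdd 1

lemma t0_ne_one : (t0 : Multiplicative ℤ) ≠ 1 := by
  intro h
  have h2 : (1 : ℤ) = 0 := congrArg Multiplicative.toAdd h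
  exact one_ne_zero h2

lemma t0_inv_ne_one : (t0⁻¹ : Multiplicative ℤ) ≠ 1 := by
  intro h
  exact t0_ne_one (by rw [← inv_inv t0, h, inv_one])

def expand : A ⊕ B → List (Monoid.Coprod A B ⊕ Multiplicative ℤ)
  | .inl a => [.inl (Monoid.Coprod.inl a)]
  | .inr b => [.inr t0, .inl (Monoid.Coprod.inr b), .inr t0⁻¹]

def expandL : List (A ⊕ B) → List (Monoid.Coprod A B ⊕ Multiplicative ℤ)
  | [] => []
  | x :: l => expand x ++ expandL l

/-- The embedding `A ∗ B →* (A ∗ B) ∗ ℤ` sending `a ↦ a` and `b ↦ t b t⁻¹`. -/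
noncomputable def phi :
    Monoid.Coprod A B →* Monoid.Coprod (Monoid.Coprod A B) (Multiplicative ℤ) :=
  Monoid.Coprod.lift (Monoid.Coprod.inl.comp Monoid.Coprod.inl)
    ((MulAut.conj (Monoid.Coprod.inr t0)).toMonoidHom.comp
      (Monoid.Coprod.inl.comp Monoid.Coprod.inr))

@[simp] lemma phi_apply_inl (a : A) :
    phi (Monoid.Coprod.inl a : Monoid.Coprod A B) = Monoid.Coprod.inl (Monoid.Coprod.inl a) := by
  simp [phi]

@[simp] lemma phi_apply_inr (b : B) :
    phi (Monoid.Coprod.inr b : Monoid.Coprod A B) =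
      Monoid.Coprod.inr t0 * Monoid.Coprod.inl (Monoid.Coprod.inr b) *
        (Monoid.Coprod.inr t0)⁻¹ := by
  simp [phi, MulAut.conj]

lemma prd_expand (x : A ⊕ B) : prd (expand x) = phi (ltr x) := by
  cases x with
  | inl a => simp [expand, ltr]
  | inr b => simp [expand, ltr, mul_assoc]

lemma prd_expandL (l : List (A ⊕ B)) : prd (expandL l) = phi (prd l) := by
  induction l with
  | nil => simp [expandL]
  | cons x l ih => rw [expandL, prd_append, prd_expand, ih, prd_cons, map_mul]

lemma expand_props {x : A ⊕ B} (hx : neOne x) :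
    Red (expand x) ∧ expand x ≠ [] ∧
      (expand x).head?.map Sum.isLeft = some x.isLeft ∧
      (expand x).getLast?.map Sum.isLeft = some x.isLeft := by
  cases x with
  | inl a =>
    refine ⟨red_singleton ?_, by simp [expand], rfl, rfl⟩
    intro h
    exact hx (Monoid.Coprod.inl_injective (by rw [h, map_one] :
      (Monoid.Coprod.inl a : Monoid.Coprod A B) = Monoid.Coprod.inl 1))
  | inr b =>
    have hb : (Monoid.Coprod.inr b : Monoid.Coprod A B) ≠ 1 := by
      intro h
      exact hx (Monoid.Coprod.inr_injective (by rw [h, map_one] :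
        (Monoid.Coprod.inr b : Monoid.Coprod A B) = Monoid.Coprod.inr 1))
    refine ⟨⟨?_, ?_⟩, by simp [expand], rfl, by simp [expand]⟩
    · exact isChain_cons_cons.2 ⟨by simp [alt], isChain_cons_cons.2 ⟨by simp [alt], isChain_singleton _⟩⟩
    · intro y hy
      simp only [expand, mem_cons, not_mem_nil, or_false] at hy
      rcases hy with rfl | rfl | rfl
      · exact t0_ne_one
      · exact hb
      · exact t0_inv_ne_one

lemma expandL_props {l : List (A ⊕ B)} (h : Red l) :
    Red (expandL l) ∧
      (expandL l).head?.map Sum.isLeft = l.head?.map Sum.isLeft ∧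
      (expandL l).getLast?.map Sum.isLeft = l.getLast?.map Sum.isLeft := by
  induction l with
  | nil => exact ⟨red_nil, rfl, rfl⟩
  | cons x l ih =>
    obtain ⟨hF, hFh, hFg⟩ := ih h.tail
    obtain ⟨hE, hEne, hEh, hEg⟩ := expand_props (h.2 x (mem_cons_self))
    rw [expandL]
    rcases l with _ | ⟨x', l'⟩
    · rw [show expandL ([] : List (A ⊕ B)) = [] from rfl, append_nil]
      exact ⟨hE, hEh, hEg⟩
    · have hFne : expandL (x' :: l') ≠ [] := by
        intro hnil
        rw [hnil] at hFh
        simp at hFh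
      refine ⟨⟨?_, ?_⟩, ?_, ?_⟩
      · rw [isChain_append]
        refine ⟨hE.1, hF.1, ?_⟩
        intro u hu v hv
        have hualt : u.isLeft = x.isLeft := by
          rw [Option.mem_def] at hu
          have : (expand x).getLast?.map Sum.isLeft = some u.isLeft := by
            rw [hu]; rfl
          rw [hEg] at this
          exact (Option.some.inj this).symm
        have hvalt : v.isLeft = x'.isLeft := by
          rw [Option.mem_def] at hv
          have : (expandL (x' :: l')).head?.map Sum.isLeft = some v.isLeft := by
            rw [hv]; rfl
          rw [hFh] at this
          exact (Option.some.inj this).symm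
        have : alt x x' := (isChain_cons.1 h.1).1 x' rfl
        rw [alt, hualt, hvalt]
        exact this
      · intro y hy
        rcases mem_append.1 hy with hy | hy
        · exact hE.2 y hy
        · exact hF.2 y hy
      · rw [head?_append_of_ne_nil _ hEne, hEh]
        rfl
      · rw [getLast?_append_of_ne_nil _ hFne, hFg]
        rfl

lemma expandL_cycRed {l : List (A ⊕ B)} (h : Red l) (hc : CycRed l) :
    CycRed (expandL l) := by
  obtain ⟨_, h1, h2⟩ := expandL_props h
  rw [CycRed, h1, h2]
  exact hc

end LGL


universe u v

/-- A generalized equation `w ∈ G * T` is nontrivial if `w` is not conjugate in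
`G * T` to an element of `G`. -/
def GenEqNontrivial (G : Type u) (T : Type v) [Group G] [Group T]
    (w : Monoid.Coprod G T) : Prop :=
  ¬ ∃ g : G, IsConj (Monoid.Coprod.inl g) w

/-- A generalized equation `w ∈ G * T` is solvable over `G` if there is a group `G'`
containing `G` as a subgroup (via an injective homomorphism) and a homomorphism
`T →* G'` such that the induced map `G * T →* G'` kills `w`. -/
def GenEqSolvable (G : Type u) (T : Type v) [Group G] [Group T]
    (w : Monoid.Coprod G T) : Prop :=
  ∃ (G' : Type (max u v)) (_ : Group G') (i : G →* G') (f : T →* G'),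
    Function.Injective i ∧ Monoid.Coprod.lift i f w = 1

/-- If the Levin conjecture holds (every nontrivial equation over a torsion-free
group is solvable over it), then every nontrivial generalized equation with
torsion-free variable group over a torsion-free group is solvable over it. -/
theorem levin_implies_generalized_levin
    (levin : ∀ (G : Type (max u v)) [Group G], (∀ g : G, IsOfFinOrder g → g = 1) →
      ∀ w : Monoid.Coprod G (Multiplicative ℤ),
        GenEqNontrivial G (Multiplicative ℤ) w → GenEqSolvable G (Multiplicative ℤ) w) :
    ∀ (G : Type u) (T : Type v) [Group G] [Group T],
      (∀ g : G, IsOfFinOrder g → g = 1) → (∀ s : T, IsOfFinOrder s → s = 1) →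
      ∀ w : Monoid.Coprod G T, GenEqNontrivial G T w → GenEqSolvable G T w := by
  intro G T _ _ hG hT w hw
  classical
  by_cases hcase : ∃ s : T, IsConj (Monoid.Coprod.inr s) w
  · -- `w` is conjugate to an element of `T`: kill `T`.
    obtain ⟨s, hs⟩ := hcase
    obtain ⟨c, hc⟩ := isConj_iff.1 hs
    refine ⟨Monoid.Coprod G T, inferInstance, Monoid.Coprod.inl, 1,
      Monoid.Coprod.inl_injective, ?_⟩
    rw [← hc]
    simp
  · rcases LGL.trich w with ⟨g, hg⟩ | ⟨s, hs⟩ | ⟨l, hl, hcyc, hconj⟩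
    · exact absurd ⟨g, hg⟩ hw
    · exact absurd ⟨s, hs⟩ hcase
    · -- the interesting case
      have hnontriv : GenEqNontrivial (Monoid.Coprod G T) (Multiplicative ℤ) (LGL.phi w) := by
        rintro ⟨h, hconjh⟩
        obtain ⟨y, hy⟩ := isConj_iff.1 hconjh
        obtain ⟨zc, hzc⟩ := isConj_iff.1 hconj
        have h1 : LGL.phi w = LGL.phi zc * LGL.prd (LGL.expandL l) * (LGL.phi zc)⁻¹ := by
          rw [LGL.prd_expandL, ← map_inv, ← map_mul, ← map_mul, hzc]
        have h4 : (LGL.phi zc)⁻¹ * (y * Monoid.Coprod.inl h * y⁻¹) * LGL.phi zc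
            = LGL.prd (LGL.expandL l) := by
          rw [hy.trans h1]
          group
        have h2 : ((LGL.phi zc)⁻¹ * y) * Monoid.Coprod.inl h * ((LGL.phi zc)⁻¹ * y)⁻¹
            = LGL.prd (LGL.expandL l) := by
          rw [← h4]
          group
        exact LGL.not_conj_prd (LGL.expandL_props hl).1 (LGL.expandL_cycRed hl hcyc)
          ((LGL.phi zc)⁻¹ * y) (Sum.inl h) h2
      obtain ⟨G', hG', i, f, hi, hkill⟩ :=
        levin (Monoid.Coprod G T) (LGL.tfree hG hT) (LGL.phi w) hnontriv
      letI := hG'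
      refine ⟨G', hG', i.comp Monoid.Coprod.inl,
        (MulAut.conj (f LGL.t0)).toMonoidHom.comp (i.comp Monoid.Coprod.inr),
        hi.comp Monoid.Coprod.inl_injective, ?_⟩
      have hcomp : Monoid.Coprod.lift (i.comp Monoid.Coprod.inl)
          ((MulAut.conj (f LGL.t0)).toMonoidHom.comp (i.comp Monoid.Coprod.inr)) =
          (Monoid.Coprod.lift i f).comp LGL.phi := by
        apply Monoid.Coprod.hom_ext
        · ext g
          simp
        · ext s
          simp [MulAut.conj]
      rw [hcomp, MonoidHom.comp_apply, hkill]
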